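/- Let α ∈ (0,1), δ ∈ [0, 1−α), and γ > 0 with λ := γ−1+α+δ(γ+1) > 0. Let X and Y be independent real-valued random variables with Y ≥ 0 almost surely, such that P[Y ≥ z] ≥ e^{−λz} for all z ≥ 0 and P[X > z] ≤ e^{−(1−α−δ)z} for all z ≥ 0. Then P[Y < X] ≤ λ/(λ + (1−α−δ)) = ((1+δ)γ − (1−α−δ))/((1+δ)γ). Consequently, if moreover P[Y < X] > (α+2δ)/(1+δ), then γ > 1. -/

import Mathlib

open MeasureTheory Set Real


lemma exp_int_Ioi {a : ℝ} (ha : 0 < a) :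
    ∫ z in Ioi (0:ℝ), Real.exp (-a * z) = 1 / a := by
  have hderiv : ∀ x ∈ Ici (0:ℝ), HasDerivAt (fun z => -(1/a) * Real.exp (-a * z))
      (Real.exp (-a * x)) x := by
    intro x _
    have h1 : HasDerivAt (fun z : ℝ => -a * z) (-a) x := by
      simpa using (hasDerivAt_id x).const_mul (-a)
    have h2 := h1.exp
    have h3 := h2.const_mul (-(1/a))
    refine h3.congr_deriv ?_
    field_simp
  have htend : Filter.Tendsto (fun z => -(1/a) * Real.exp (-a * z)) Filter.atTop (nhds 0) := by
    have : Filter.Tendsto (fun z : ℝ => Real.exp (-a * z)) Filter.atTop (nhds 0) := by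
      apply Real.tendsto_exp_atBot.comp
      apply Filter.Tendsto.const_mul_atTop_of_neg (by linarith : -a < 0) Filter.tendsto_id
    simpa using this.const_mul (-(1/a))
  have := integral_Ioi_of_hasDerivAt_of_tendsto' hderiv (exp_neg_integrableOn_Ioi 0 ha) htend
  simp only [neg_mul] at this ⊢
  rw [this]
  field_simp
  simp

lemma lint_exp_Ioi {a : ℝ} (ha : 0 < a) :
    ∫⁻ z in Ioi (0:ℝ), ENNReal.ofReal (Real.exp (-a * z)) = ENNReal.ofReal (1 / a) := by
  rw [← exp_int_Ioi ha, ofReal_integral_eq_lintegral_ofReal (exp_neg_integrableOn_Ioi 0 ha)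
    (ae_of_all _ fun z => (Real.exp_pos _).le)]

lemma int_exp_Ioc {a y : ℝ} (ha : 0 < a) (hy : 0 ≤ y) :
    ∫ z in Ioc (0:ℝ) y, a * Real.exp (-a * z) = 1 - Real.exp (-a * y) := by
  rw [← intervalIntegral.integral_of_le hy]
  have hderiv : ∀ x ∈ uIcc (0:ℝ) y, HasDerivAt (fun z => -Real.exp (-a * z))
      (a * Real.exp (-a * x)) x := by
    intro x _
    have h1 : HasDerivAt (fun z : ℝ => -a * z) (-a) x := by
      simpa using (hasDerivAt_id x).const_mul (-a)
    have h2 := h1.exp.neg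
    refine h2.congr_deriv ?_
    ring
  have hcont : Continuous fun z : ℝ => a * Real.exp (-a * z) := by continuity
  rw [intervalIntegral.integral_eq_sub_of_hasDerivAt hderiv (hcont.intervalIntegrable 0 y)]
  simp [Real.exp_zero]
  ring

lemma lint_exp_Ioc {a y : ℝ} (ha : 0 < a) (hy : 0 ≤ y) :
    ∫⁻ z in Ioc (0:ℝ) y, ENNReal.ofReal (a * Real.exp (-a * z)) =
      ENNReal.ofReal (1 - Real.exp (-a * y)) := by
  rw [← int_exp_Ioc ha hy, ofReal_integral_eq_lintegral_ofReal]
  · exact ((continuous_const.mul (by continuity : Continuous fun z : ℝ => Real.exp (-a*z)))).integrableOn_Ioc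
  · exact ae_of_all _ fun z => by positivity

set_option maxHeartbeats 1000000 in
lemma key_bound {Ω : Type*} [MeasurableSpace Ω] (μ : Measure Ω) [IsProbabilityMeasure μ]
    (L b : ℝ) (hL : 0 < L) (hb : 0 < b)
    (X Y : Ω → ℝ) (hXm : Measurable X) (hYm : Measurable Y)
    (hindep : ProbabilityTheory.IndepFun X Y μ)
    (hY0 : ∀ᵐ ω ∂μ, 0 ≤ Y ω)
    (hY : ∀ z : ℝ, 0 ≤ z → Real.exp (-L * z) ≤ (μ {ω | z ≤ Y ω}).toReal)
    (hX : ∀ z : ℝ, 0 ≤ z → (μ {ω | z < X ω}).toReal ≤ Real.exp (-b * z)) :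
    (μ {ω | Y ω < X ω}).toReal ≤ L / (L + b) := by
  haveI : IsProbabilityMeasure (μ.map X) := Measure.isProbabilityMeasure_map hXm.aemeasurable
  haveI : IsProbabilityMeasure (μ.map Y) := Measure.isProbabilityMeasure_map hYm.aemeasurable
  set c : ℝ → ENNReal := fun z => ENNReal.ofReal (b * Real.exp (-b * z)) with hc
  have hcm : Measurable c := by
    apply ENNReal.measurable_ofReal.comp
    exact (continuous_const.mul (by continuity : Continuous fun z : ℝ => Real.exp (-b*z))).measurable
  set f : Ω → ℝ → ENNReal := fun ω z => if z ≤ Y ω then c z else 0 with hf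
  have hfm : Measurable (Function.uncurry f) := by
    apply Measurable.ite (measurableSet_le measurable_snd (hYm.comp measurable_fst))
    · exact hcm.comp measurable_snd
    · exact measurable_const
  set ν : Measure ℝ := volume.restrict (Set.Ioi (0:ℝ)) with hν
  set E : ENNReal := ∫⁻ ω, ENNReal.ofReal (Real.exp (-b * Y ω)) ∂μ with hE
  set I : ENNReal := ∫⁻ ω, ∫⁻ z, f ω z ∂ν ∂μ with hI
  have hEm : Measurable fun ω => ENNReal.ofReal (Real.exp (-b * Y ω)) :=
    ENNReal.measurable_ofReal.comp ((Real.continuous_exp.measurable).comp (hYm.const_mul (-b)))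
  -- step 1 : μ {Y < X} ≤ E
  have hmap : μ.map (fun ω => (X ω, Y ω)) = (μ.map X).prod (μ.map Y) :=
    (ProbabilityTheory.indepFun_iff_map_prod_eq_prod_map_map hXm.aemeasurable hYm.aemeasurable).mp
      hindep
  have hms : MeasurableSet {p : ℝ × ℝ | p.2 < p.1} :=
    measurableSet_lt measurable_snd measurable_fst
  have h1 : μ {ω | Y ω < X ω} = ∫⁻ y, μ.map X (Set.Ioi y) ∂(μ.map Y) := by
    have hpre : {ω | Y ω < X ω} = (fun ω => (X ω, Y ω)) ⁻¹' {p : ℝ × ℝ | p.2 < p.1} := rfl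
    rw [hpre, ← Measure.map_apply (hXm.prodMk hYm) hms, hmap, Measure.prod_apply_symm hms]
    rfl
  have h2 : ∀ᵐ y ∂(μ.map Y), 0 ≤ y := by
    rw [MeasureTheory.ae_map_iff hYm.aemeasurable (measurableSet_Ici : MeasurableSet (Set.Ici (0:ℝ)))]
    exact hY0
  have hstep1 : μ {ω | Y ω < X ω} ≤ E := by
    have hgm : Measurable fun y : ℝ => ENNReal.ofReal (Real.exp (-b * y)) :=
      ENNReal.measurable_ofReal.comp
        ((Real.continuous_exp.measurable).comp (measurable_id.const_mul (-b)))
    rw [h1, hE, ← lintegral_map hgm hYm]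
    refine lintegral_mono_ae ?_
    filter_upwards [h2] with y hy
    rw [Measure.map_apply hXm measurableSet_Ioi]
    exact (ENNReal.le_ofReal_iff_toReal_le (measure_ne_top μ _) (Real.exp_pos _).le).mpr
      (hX y hy)
  -- step (a): inner integral of f
  have ha : ∀ᵐ ω ∂μ, ∫⁻ z, f ω z ∂ν = ENNReal.ofReal (1 - Real.exp (-b * Y ω)) := by
    filter_upwards [hY0] with ω hω
    have e0 : ∫⁻ z, f ω z ∂ν = ∫⁻ z, Set.indicator (Set.Iic (Y ω)) c z ∂ν :=
      lintegral_congr fun z => by simp [hf, Set.indicator_apply, Set.mem_Iic]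
    rw [e0, lintegral_indicator measurableSet_Iic c, hν,
      Measure.restrict_restrict measurableSet_Iic, Set.inter_comm, Set.Ioi_inter_Iic]
    exact lint_exp_Ioc hb hω
  -- step (b): E + I = 1
  have hb1 : E + I = 1 := by
    rw [hE, hI, ← lintegral_add_left hEm]
    have : ∀ᵐ ω ∂μ, (ENNReal.ofReal (Real.exp (-b * Y ω)) + ∫⁻ z, f ω z ∂ν) = 1 := by
      filter_upwards [ha, hY0] with ω hω hω0
      rw [hω, ← ENNReal.ofReal_add (Real.exp_pos _).le (by
        have : Real.exp (-b * Y ω) ≤ 1 := Real.exp_le_one_iff.mpr (by nlinarith)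
        linarith)]
      simp
    rw [lintegral_congr_ae this]
    simp
  -- step (c): swap
  have hIc : I = ∫⁻ z, c z * μ {ω | z ≤ Y ω} ∂ν := by
    rw [hI, lintegral_lintegral_swap hfm.aemeasurable]
    refine lintegral_congr fun z => ?_
    have e0 : ∫⁻ ω, f ω z ∂μ = ∫⁻ ω, Set.indicator {ω | z ≤ Y ω} (fun _ => c z) ω ∂μ :=
      lintegral_congr fun ω => by simp [hf, Set.indicator_apply]
    rw [e0, lintegral_indicator_const (measurableSet_le measurable_const hYm)]
  -- step (d): lower bound on I
  have hd : ENNReal.ofReal (b / (b + L)) ≤ I := by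
    have hbL : (0:ℝ) < b + L := by linarith
    have hmeas : Measurable fun z : ℝ => ENNReal.ofReal (Real.exp (-(b + L) * z)) :=
      ENNReal.measurable_ofReal.comp
        ((Real.continuous_exp.measurable).comp (measurable_id.const_mul (-(b + L))))
    have e1 : ENNReal.ofReal (b / (b + L)) =
        ∫⁻ z in Set.Ioi (0:ℝ), ENNReal.ofReal b * ENNReal.ofReal (Real.exp (-(b + L) * z)) := by
      rw [lintegral_const_mul _ hmeas, lint_exp_Ioi hbL, ← ENNReal.ofReal_mul hb.le]
      congr 1
      field_simp
    rw [hIc, hν, e1]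
    refine lintegral_mono_ae ?_
    rw [ae_restrict_iff' measurableSet_Ioi]
    refine ae_of_all _ fun z hz => ?_
    have hz0 : (0:ℝ) ≤ z := le_of_lt hz
    have hexp : Real.exp (-(b + L) * z) = Real.exp (-b * z) * Real.exp (-L * z) := by
      rw [← Real.exp_add]; congr 1; ring
    have hsplit : ENNReal.ofReal b * ENNReal.ofReal (Real.exp (-(b + L) * z)) =
        ENNReal.ofReal (b * Real.exp (-b * z)) * ENNReal.ofReal (Real.exp (-L * z)) := by
      rw [hexp, ← ENNReal.ofReal_mul hb.le, ← mul_assoc,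
        ENNReal.ofReal_mul (by positivity : (0:ℝ) ≤ b * Real.exp (-b * z))]
    rw [hsplit]
    exact mul_le_mul_right (ENNReal.ofReal_le_of_le_toReal (hY z hz0)) _
  -- combine
  have hE_le : E ≤ ENNReal.ofReal (L / (L + b)) := by
    have h3 : E + ENNReal.ofReal (b / (b + L)) ≤ 1 := by
      calc E + ENNReal.ofReal (b / (b + L)) ≤ E + I := add_le_add_right hd E
        _ = 1 := hb1
    have h4 : E ≤ 1 - ENNReal.ofReal (b / (b + L)) :=
      ENNReal.le_sub_of_add_le_right ENNReal.ofReal_ne_top h3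
    refine h4.trans (le_of_eq ?_)
    rw [← ENNReal.ofReal_one, ← ENNReal.ofReal_sub _ (by positivity)]
    congr 1
    have hbL : (0:ℝ) < b + L := by linarith
    have hbL2 : (b:ℝ) + L ≠ 0 := by positivity
    rw [add_comm L b, eq_comm, div_eq_iff hbL2, sub_mul, one_mul, div_mul_cancel₀ _ hbL2]
    ring
  exact ENNReal.toReal_le_of_le_ofReal (by positivity) (hstep1.trans hE_le)


/-- Under fluctuating online stake: if `Y ≥ 0` has survival function at least
`e^(-λz)` with `λ = γ-1+α+δ(γ+1) > 0`, `X` has `P[X > z] ≤ e^(-(1-α-δ)z)`, and `X`, `Y`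
are independent, then `P[Y < X] ≤ λ/(λ+(1-α-δ)) = ((1+δ)γ-(1-α-δ))/((1+δ)γ)`;
consequently a `2δ`-profitable adversary (`P[Y < X] > (α+2δ)/(1+δ)`) forces `γ > 1`. -/
theorem stmt_12 {Ω : Type*} [MeasurableSpace Ω] (μ : Measure Ω) [IsProbabilityMeasure μ]
    (α δ γ : ℝ) (hα0 : 0 < α) (hα1 : α < 1) (hδ0 : 0 ≤ δ) (hδ1 : δ < 1 - α) (hγ : 0 < γ)
    (hlam : 0 < γ - 1 + α + δ * (γ + 1))
    (X Y : Ω → ℝ) (hXm : Measurable X) (hYm : Measurable Y)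
    (hindep : ProbabilityTheory.IndepFun X Y μ)
    (hY0 : ∀ᵐ ω ∂μ, 0 ≤ Y ω)
    (hY : ∀ z : ℝ, 0 ≤ z →
      Real.exp (-(γ - 1 + α + δ * (γ + 1)) * z) ≤ (μ {ω | z ≤ Y ω}).toReal)
    (hX : ∀ z : ℝ, 0 ≤ z → (μ {ω | z < X ω}).toReal ≤ Real.exp (-(1 - α - δ) * z)) :
    ((μ {ω | Y ω < X ω}).toReal ≤
        (γ - 1 + α + δ * (γ + 1)) / ((γ - 1 + α + δ * (γ + 1)) + (1 - α - δ)) ∧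
      (γ - 1 + α + δ * (γ + 1)) / ((γ - 1 + α + δ * (γ + 1)) + (1 - α - δ)) =
        ((1 + δ) * γ - (1 - α - δ)) / ((1 + δ) * γ)) ∧
    ((α + 2 * δ) / (1 + δ) < (μ {ω | Y ω < X ω}).toReal → 1 < γ) := by
  have hb0 : 0 < 1 - α - δ := by linarith
  have key := key_bound μ (γ - 1 + α + δ * (γ + 1)) (1 - α - δ) hlam hb0 X Y hXm hYm hindep
    hY0 hY hX
  have hsum : (γ - 1 + α + δ * (γ + 1)) + (1 - α - δ) = (1 + δ) * γ := by ring
  have hid : (γ - 1 + α + δ * (γ + 1)) / ((γ - 1 + α + δ * (γ + 1)) + (1 - α - δ)) =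
      ((1 + δ) * γ - (1 - α - δ)) / ((1 + δ) * γ) := by
    rw [hsum]; congr 1; ring
  refine ⟨⟨key, hid⟩, fun h => ?_⟩
  by_contra hγ1
  push_neg at hγ1
  have h5 : (α + 2 * δ) / (1 + δ) < (γ - 1 + α + δ * (γ + 1)) / ((1 + δ) * γ) := by
    rw [← hsum]; exact lt_of_lt_of_le h key
  rw [div_lt_div_iff₀ (by linarith) (by positivity)] at h5
  nlinarith [mul_nonneg (mul_nonneg (by linarith : (0:ℝ) ≤ 1 + δ)
    (by linarith : (0:ℝ) ≤ 1 - γ)) (by linarith : (0:ℝ) ≤ 1 - α - δ)]
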